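/- arXiv:1301.2342 — 2 statements merged into one kernel-verified Lean document; each statement's English description precedes it below -/
import Mathlib

section
/- Pebble equivalence is transitive: let S be a configuration of p pebbles on a connected graph G, and suppose pebbles i and j are equivalent with respect to S, and pebbles j and k are equivalent with respect to S. Then pebbles i and k are equivalent with respect to S. -/
/-- A single pebble move: configurations `S`, `S'` (injective maps of pebbles to
vertices) differ at exactly one pebble `i`, which moves along an edge of `G`
to a vertex unoccupied in `S`. -/
def Move {V : Type*} (G : SimpleGraph V) {p : ℕ} (S S' : Fin p → V) : Prop :=
  Function.Injective S ∧ Function.Injective S' ∧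
    ∃ i : Fin p, G.Adj (S i) (S' i) ∧ (∀ j, j ≠ i → S' j = S j) ∧ ∀ j, S j ≠ S' i

/-- Reachability: reflexive-transitive closure of the move relation. -/
def Reach {V : Type*} (G : SimpleGraph V) {p : ℕ} (S S' : Fin p → V) : Prop :=
  Relation.ReflTransGen (Move G) S S'

/-- Pebbles `i`, `j` are equivalent w.r.t. `S` if the configuration equal to `S`
with the positions of `i` and `j` swapped (all other pebbles unchanged) is
reachable from `S`. -/
def PebEquiv {V : Type*} (G : SimpleGraph V) {p : ℕ} (S : Fin p → V) (i j : Fin p) : Prop :=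
  Reach G S (S ∘ Equiv.swap i j)

/-- The cycle graph on `n` vertices `v_0, …, v_{n-1}`, with edges `(v_j, v_{j+1 mod n})`. -/
def cycleGraph (n : ℕ) : SimpleGraph (ZMod n) :=
  SimpleGraph.fromRel (fun a b => b = a + 1)

lemma move_relabel {V : Type*} (G : SimpleGraph V) {p : ℕ} {S S' : Fin p → V}
    (σ : Equiv.Perm (Fin p)) (h : Move G S S') : Move G (S ∘ σ) (S' ∘ σ) := by
  obtain ⟨hS, hS', i, hadj, hfix, hemp⟩ := h
  refine ⟨hS.comp σ.injective, hS'.comp σ.injective, σ.symm i, ?_, ?_, ?_⟩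
  · simpa using hadj
  · intro m hm
    simp only [Function.comp_apply]
    exact hfix (σ m) (fun h => hm (by simpa using congrArg σ.symm h))
  · intro m
    simpa using hemp (σ m)

lemma reach_relabel {V : Type*} (G : SimpleGraph V) {p : ℕ} {S S' : Fin p → V}
    (σ : Equiv.Perm (Fin p)) (h : Reach G S S') : Reach G (S ∘ σ) (S' ∘ σ) := by
  induction h with
  | refl => exact Relation.ReflTransGen.refl
  | tail _ hmove ih => exact ih.tail (move_relabel G σ hmove)

/-- pebble equivalence is transitive. -/
theorem stmt_4 {V : Type*} (G : SimpleGraph V) (hG : G.Connected) {p : ℕ}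
    (S : Fin p → V) (hS : Function.Injective S) (i j k : Fin p)
    (hij : PebEquiv G S i j) (hjk : PebEquiv G S j k) :
    PebEquiv G S i k := by
  by_cases hik : i = k
  · subst hik; unfold PebEquiv; simp [Equiv.swap_self]
    exact Relation.ReflTransGen.refl
  by_cases hij' : i = j
  · subst hij'; exact hjk
  by_cases hjk' : j = k
  · subst hjk'; exact hij
  -- all distinct
  have key : Equiv.swap i j * Equiv.swap j k * Equiv.swap i j = Equiv.swap i k := by
    have := Equiv.swap_apply_apply (Equiv.swap i j) j k
    rw [Equiv.swap_apply_right, Equiv.swap_apply_of_ne_of_ne (Ne.symm hik) (Ne.symm hjk'),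
      Equiv.swap_inv] at this
    exact this.symm
  have h1 : Reach G (S ∘ Equiv.swap i j) (S ∘ Equiv.swap j k ∘ Equiv.swap i j) :=
    reach_relabel G (Equiv.swap i j) hjk
  have h2 : Reach G (S ∘ Equiv.swap j k ∘ Equiv.swap i j)
      (S ∘ Equiv.swap i j ∘ Equiv.swap j k ∘ Equiv.swap i j) := by
    have := reach_relabel G (Equiv.swap j k * Equiv.swap i j) hij
    simpa [Function.comp_def, Equiv.Perm.mul_apply] using this
  have h3 : (S ∘ Equiv.swap i j ∘ Equiv.swap j k ∘ Equiv.swap i j : Fin p → V)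
      = S ∘ Equiv.swap i k := by
    rw [← key]; rfl
  exact (hij.trans h1).trans (h3 ▸ h2)
end

section
/- On the path graph P_n (vertices v_1,…,v_n in a line), for any configuration S of p ≤ n pebbles and any configuration D with V(S) = V(D), D is reachable from S if and only if the pebbles appear in the same left-to-right order in S and D; in particular no two pebbles can ever exchange their relative order on a path. -/
private lemma move_order {n p : ℕ} {S S' : Fin p → Fin n}
    (h : Move (SimpleGraph.pathGraph n) S S') :
    ∀ i j : Fin p, S i < S j ↔ S' i < S' j := by
  obtain ⟨hS, hS', i₀, hadj, hfix, hne⟩ := h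
  rw [SimpleGraph.pathGraph_adj] at hadj
  intro i j
  rcases eq_or_ne i i₀ with hii | hi
  · rcases eq_or_ne j i₀ with hjj | hj
    · rw [hii, hjj]; simp
    · rw [hii]
      have h1 := hfix j hj
      have h2 : (S j : ℕ) ≠ (S i₀ : ℕ) := fun h => hj (hS (Fin.val_injective h))
      have h3 : (S j : ℕ) ≠ (S' i₀ : ℕ) := fun h => hne j (Fin.val_injective h)
      rw [h1, Fin.lt_def, Fin.lt_def]
      omega
  · rcases eq_or_ne j i₀ with hjj | hj
    · rw [hjj]
      have h1 := hfix i hi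
      have h2 : (S i : ℕ) ≠ (S i₀ : ℕ) := fun h => hi (hS (Fin.val_injective h))
      have h3 : (S i : ℕ) ≠ (S' i₀ : ℕ) := fun h => hne i (Fin.val_injective h)
      rw [h1, Fin.lt_def, Fin.lt_def]
      omega
    · rw [hfix i hi, hfix j hj]

private lemma eq_of_order {n p : ℕ} {S D : Fin p → Fin n}
    (hS : Function.Injective S) (hD : Function.Injective D)
    (hV : Set.range S = Set.range D)
    (hord : ∀ i j : Fin p, S i < S j ↔ D i < D j) : S = D := by
  have hmem : ∀ x : Fin n, (∃ k, S k = x) ↔ (∃ k, D k = x) := by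
    intro x
    have := Set.ext_iff.mp hV x
    simpa [Set.mem_range] using this
  funext i
  set T : Finset (Fin n) := Finset.univ.image S with hTdef
  have hTD : Finset.univ.image D = T := by
    ext x
    simp only [hTdef, Finset.mem_image, Finset.mem_univ, true_and]
    exact (hmem x).symm
  set A : Finset (Fin n) := T.filter (· ≤ S i) with hAdef
  set B : Finset (Fin n) := T.filter (· ≤ D i) with hBdef
  have hAcard : A.card = (Finset.univ.filter (fun j => S j ≤ S i)).card := by
    rw [hAdef]
    have : T.filter (· ≤ S i) = (Finset.univ.filter (fun j => S j ≤ S i)).image S := by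
      ext x
      simp only [Finset.mem_filter, Finset.mem_image, Finset.mem_univ, true_and, hTdef]
      constructor
      · rintro ⟨⟨k, rfl⟩, hk⟩; exact ⟨k, hk, rfl⟩
      · rintro ⟨k, hk, rfl⟩; exact ⟨⟨k, rfl⟩, hk⟩
    rw [this, Finset.card_image_of_injective _ hS]
  have hBcard : B.card = (Finset.univ.filter (fun j => D j ≤ D i)).card := by
    rw [hBdef]
    have : T.filter (· ≤ D i) = (Finset.univ.filter (fun j => D j ≤ D i)).image D := by
      ext x
      simp only [Finset.mem_filter, Finset.mem_image, Finset.mem_univ, true_and, ← hTD]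
      constructor
      · rintro ⟨⟨k, rfl⟩, hk⟩; exact ⟨k, hk, rfl⟩
      · rintro ⟨k, hk, rfl⟩; exact ⟨⟨k, rfl⟩, hk⟩
    rw [this, Finset.card_image_of_injective _ hD]
  have hfilt : (Finset.univ.filter (fun j => S j ≤ S i)) =
      (Finset.univ.filter (fun j => D j ≤ D i)) := by
    ext k
    simp only [Finset.mem_filter, Finset.mem_univ, true_and]
    rw [← not_lt, ← not_lt, hord i k]
  have hcard : A.card = B.card := by rw [hAcard, hBcard, hfilt]
  have hSiT : S i ∈ T := by simp [hTdef]
  have hDiT : D i ∈ T := by rw [← hTD]; simp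
  rcases lt_trichotomy (S i) (D i) with hlt | heq | hgt
  · exfalso
    have hsub : A ⊂ B := by
      constructor
      · intro x hx
        rw [hAdef, Finset.mem_filter] at hx
        rw [hBdef, Finset.mem_filter]
        exact ⟨hx.1, le_trans hx.2 hlt.le⟩
      · intro hBA
        have : D i ∈ A := hBA (by rw [hBdef, Finset.mem_filter]; exact ⟨hDiT, le_refl _⟩)
        rw [hAdef, Finset.mem_filter] at this
        exact absurd this.2 (not_le.mpr hlt)
    exact absurd hcard (Finset.card_lt_card hsub).ne
  · exact heq
  · exfalso
    have hsub : B ⊂ A := by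
      constructor
      · intro x hx
        rw [hBdef, Finset.mem_filter] at hx
        rw [hAdef, Finset.mem_filter]
        exact ⟨hx.1, le_trans hx.2 hgt.le⟩
      · intro hAB
        have : S i ∈ B := hAB (by rw [hAdef, Finset.mem_filter]; exact ⟨hSiT, le_refl _⟩)
        rw [hBdef, Finset.mem_filter] at this
        exact absurd this.2 (not_le.mpr hgt)
    exact absurd hcard.symm (Finset.card_lt_card hsub).ne

private lemma reach_order {n p : ℕ} {S D : Fin p → Fin n}
    (h : Reach (SimpleGraph.pathGraph n) S D) :
    ∀ i j : Fin p, S i < S j ↔ D i < D j := by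
  induction h with
  | refl => intro i j; rfl
  | tail _ hmove ih =>
    intro i j
    exact (ih i j).trans (move_order hmove i j)

/-- on the path graph, `D` is reachable from `S` (with the same
occupied vertex set) iff the pebbles appear in the same left-to-right order. -/
theorem stmt_15 {n p : ℕ} (hp : p ≤ n)
    (S D : Fin p → Fin n) (hS : Function.Injective S) (hD : Function.Injective D)
    (hV : Set.range S = Set.range D) :
    Reach (SimpleGraph.pathGraph n) S D ↔ ∀ i j : Fin p, S i < S j ↔ D i < D j := by
  constructor
  · exact fun h => reach_order h
  · intro hord
    have : S = D := eq_of_order hS hD hV hord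
    rw [this]
    exact Relation.ReflTransGen.refl
end
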